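/- For all μ, μ̂ ∈ 𝒫(X), ‖H(μ) − H(μ̂)‖₁ ≤ K_H ‖μ − μ̂‖₁, where K_H := (3K1/2)(1 + K_{H1}/ρ); in particular, if K_H < 1 (Assumption 2), the mean-field equilibrium operator H is a contraction on (𝒫(X), ‖·‖₁) with contraction constant K_H. (Proposition 4.) -/

import Mathlib

namespace MFG

open Finset

def IsProb {E : Type*} [Fintype E] (μ : E → ℝ) : Prop :=
  (∀ e, 0 ≤ μ e) ∧ ∑ e, μ e = 1

def l1 {E : Type*} [Fintype E] (μ ν : E → ℝ) : ℝ :=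
  ∑ e, |μ e - ν e|

def ind {E : Type*} [DecidableEq E] (x y : E) : ℝ :=
  if x = y then 0 else 1

def RewardLip {X A : Type*} [Fintype X] [Fintype A] [DecidableEq X] [DecidableEq A]
    (r : X → A → (X → ℝ) → ℝ) (L1 : ℝ) : Prop :=
  ∀ x x' a a' μ μ', IsProb μ → IsProb μ' →
    |r x a μ - r x' a' μ'| ≤ L1 * (ind x x' + 2 * ind a a' + l1 μ μ')

def KernelLip {X A : Type*} [Fintype X] [Fintype A] [DecidableEq X] [DecidableEq A]
    (p : X → A → (X → ℝ) → X → ℝ) (K1 : ℝ) : Prop :=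
  ∀ x x' a a' μ μ', IsProb μ → IsProb μ' →
    l1 (p x a μ) (p x' a' μ') ≤ K1 * (ind x x' + 2 * ind a a' + l1 μ μ')

def IsKernel {X A : Type*} [Fintype X] [Fintype A]
    (p : X → A → (X → ℝ) → X → ℝ) : Prop :=
  ∀ x a μ, IsProb μ → IsProb (p x a μ)

def RewardNonneg {X A : Type*} [Fintype X] [Fintype A]
    (r : X → A → (X → ℝ) → ℝ) : Prop :=
  ∀ x a μ, IsProb μ → 0 ≤ r x a μ

def OmegaLip {A : Type*} [Fintype A] (Ω : (A → ℝ) → ℝ) (Lreg : ℝ) : Prop :=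
  ∀ u v, IsProb u → IsProb v → |Ω u - Ω v| ≤ Lreg * l1 u v

def StrongConvex {A : Type*} [Fintype A] (Ω : (A → ℝ) → ℝ)
    (DΩ : (A → ℝ) → (A → ℝ)) (ρ : ℝ) : Prop :=
  ∀ u v, IsProb u → IsProb v →
    Ω u + (∑ a, DΩ u a * (v a - u a)) + ρ / 2 * (l1 u v) ^ 2 ≤ Ω v

noncomputable def Tbell {X A : Type*} [Fintype X] [Fintype A]
    (r : X → A → (X → ℝ) → ℝ) (p : X → A → (X → ℝ) → X → ℝ)
    (Ω : (A → ℝ) → ℝ) (β : ℝ) (μ : X → ℝ) (v : X → ℝ) (x : X) : ℝ :=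
  ⨆ u : {w : A → ℝ // IsProb w},
    ((∑ a, r x a μ * u.1 a) - Ω u.1 + β * ∑ y, v y * (∑ a, p x a μ y * u.1 a))

noncomputable def Qmax {X A : Type*} [Fintype A] (Q : X → (A → ℝ) → ℝ) (y : X) : ℝ :=
  ⨆ u : {w : A → ℝ // IsProb w}, Q y u.1

noncomputable def Lbell {X A : Type*} [Fintype X] [Fintype A]
    (r : X → A → (X → ℝ) → ℝ) (p : X → A → (X → ℝ) → X → ℝ)
    (Ω : (A → ℝ) → ℝ) (β : ℝ) (μ : X → ℝ) (Q : X → (A → ℝ) → ℝ)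
    (x : X) (u : A → ℝ) : ℝ :=
  (∑ a, r x a μ * u a) - Ω u + β * ∑ y, Qmax Q y * (∑ a, p x a μ y * u a)

def BddFixedPoint {X A : Type*} [Fintype X] [Fintype A]
    (r : X → A → (X → ℝ) → ℝ) (p : X → A → (X → ℝ) → X → ℝ)
    (Ω : (A → ℝ) → ℝ) (β : ℝ) (μ : X → ℝ) (Q : X → (A → ℝ) → ℝ) : Prop :=
  (∃ C, ∀ x u, IsProb u → |Q x u| ≤ C) ∧
  (∀ x u, IsProb u → Q x u = Lbell r p Ω β μ Q x u)

lemma l1_nonneg {E : Type*} [Fintype E] (μ ν : E → ℝ) : 0 ≤ l1 μ ν :=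
  Finset.sum_nonneg fun _ _ => abs_nonneg _

lemma l1_comm {E : Type*} [Fintype E] (μ ν : E → ℝ) : l1 μ ν = l1 ν μ := by
  unfold l1; exact Finset.sum_congr rfl fun e _ => abs_sub_comm _ _

lemma ind_nonneg {E : Type*} [DecidableEq E] (x y : E) : 0 ≤ ind x y := by
  unfold ind; split <;> norm_num

lemma ind_le_one {E : Type*} [DecidableEq E] (x y : E) : ind x y ≤ 1 := by
  unfold ind; split <;> norm_num

lemma ind_self {E : Type*} [DecidableEq E] (x : E) : ind x x = 0 := by simp [ind]

lemma couple {E Y : Type*} [Fintype E] [Fintype Y] (p : E → Y → ℝ) (d : E → ℝ)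
    (hd : ∑ e, d e = 0) {M : ℝ} (hM : 0 ≤ M)
    (h : ∀ e e', 0 < d e → d e' < 0 → l1 (p e) (p e') ≤ M) :
    ∑ y, |∑ e, p e y * d e| ≤ M / 2 * ∑ e, |d e| := by
  set dp : E → ℝ := fun e => max (d e) 0 with hdp
  set dm : E → ℝ := fun e => max (-d e) 0 with hdm
  have hsub : ∀ e, dp e - dm e = d e := fun e => max_zero_sub_max_neg_zero_eq_self (d e)
  have habs : ∀ e, dp e + dm e = |d e| := fun e => max_zero_add_max_neg_zero_eq_abs_self (d e)
  have hdp0 : ∀ e, 0 ≤ dp e := fun e => le_max_right _ _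
  have hdm0 : ∀ e, 0 ≤ dm e := fun e => le_max_right _ _
  set s := ∑ e, dp e with hs
  have hsm : ∑ e, dm e = s := by
    have : ∑ e, (dp e - dm e) = 0 := by rw [Finset.sum_congr rfl fun e _ => hsub e]; exact hd
    rw [Finset.sum_sub_distrib] at this; linarith
  have habs' : ∑ e, |d e| = 2 * s := by
    rw [← Finset.sum_congr rfl fun e _ => habs e, Finset.sum_add_distrib, hsm]; ring
  have hs0 : 0 ≤ s := Finset.sum_nonneg fun e _ => hdp0 e
  rcases eq_or_lt_of_le hs0 with hseq | hspos
  · -- s = 0 : d = 0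
    have hz : ∀ e, d e = 0 := by
      intro e
      have h1 : dp e = 0 := by
        have := (Finset.sum_eq_zero_iff_of_nonneg (fun e _ => hdp0 e)).1 hseq.symm
        exact this e (mem_univ e)
      have h2 : dm e = 0 := by
        have := (Finset.sum_eq_zero_iff_of_nonneg (fun e _ => hdm0 e)).1 (by rw [hsm]; exact hseq.symm)
        exact this e (mem_univ e)
      have := hsub e; rw [h1, h2] at this; linarith
    have : ∀ y, (∑ e, p e y * d e) = 0 := fun y => Finset.sum_eq_zero fun e _ => by rw [hz e]; ring
    simp only [this, abs_zero, Finset.sum_const, smul_zero]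
    positivity
  · have key : ∀ y, s * (∑ e, p e y * d e) = ∑ e, ∑ e', dp e * dm e' * (p e y - p e' y) := by
      intro y
      have expand : ∑ e, ∑ e', dp e * dm e' * (p e y - p e' y)
          = (∑ e, dp e * p e y) * (∑ e', dm e') - (∑ e, dp e) * (∑ e', dm e' * p e' y) := by
        rw [Finset.sum_mul_sum, Finset.sum_mul_sum, ← Finset.sum_sub_distrib]
        refine Finset.sum_congr rfl fun e _ => ?_
        rw [← Finset.sum_sub_distrib]
        exact Finset.sum_congr rfl fun e' _ => by ring
      rw [expand, hsm, ← hs]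
      have calc1 : (∑ e, dp e * p e y) * s - s * (∑ e', dm e' * p e' y)
          = s * ∑ e, p e y * d e := by
        calc (∑ e, dp e * p e y) * s - s * (∑ e', dm e' * p e' y)
            = s * ((∑ e, dp e * p e y) - (∑ e, dm e * p e y)) := by ring
          _ = s * ∑ e, (dp e * p e y - dm e * p e y) := by rw [Finset.sum_sub_distrib]
          _ = s * ∑ e, p e y * d e := by
              congr 1; refine Finset.sum_congr rfl fun e _ => ?_
              rw [← hsub e]; ring
      linarith [calc1]
    have step : ∀ y, |∑ e, p e y * d e| ≤ s⁻¹ * ∑ e, ∑ e', dp e * dm e' * |p e y - p e' y| := by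
      intro y
      rw [show |∑ e, p e y * d e| = s⁻¹ * |s * (∑ e, p e y * d e)| by
        rw [abs_mul, abs_of_pos hspos]; field_simp]
      refine mul_le_mul_of_nonneg_left ?_ (by positivity)
      rw [key y]
      refine (Finset.abs_sum_le_sum_abs _ _).trans ?_
      refine Finset.sum_le_sum fun e _ => ?_
      refine (Finset.abs_sum_le_sum_abs _ _).trans ?_
      refine Finset.sum_le_sum fun e' _ => ?_
      rw [abs_mul, abs_of_nonneg (by positivity : (0:ℝ) ≤ dp e * dm e')]
    calc ∑ y, |∑ e, p e y * d e| ≤ ∑ y, s⁻¹ * ∑ e, ∑ e', dp e * dm e' * |p e y - p e' y| :=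
          Finset.sum_le_sum fun y _ => step y
      _ = s⁻¹ * ∑ e, ∑ e', dp e * dm e' * l1 (p e) (p e') := by
          rw [← Finset.mul_sum]
          congr 1
          rw [Finset.sum_comm]
          refine Finset.sum_congr rfl fun e _ => ?_
          rw [Finset.sum_comm]
          refine Finset.sum_congr rfl fun e' _ => ?_
          unfold l1; rw [Finset.mul_sum]
      _ ≤ s⁻¹ * ∑ e, ∑ e', dp e * dm e' * M := by
          refine mul_le_mul_of_nonneg_left (Finset.sum_le_sum fun e _ => Finset.sum_le_sum fun e' _ => ?_) (by positivity)
          rcases eq_or_lt_of_le (hdp0 e) with h1 | h1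
          · rw [← h1]; simp
          · rcases eq_or_lt_of_le (hdm0 e') with h2 | h2
            · rw [← h2]; simp
            · refine mul_le_mul_of_nonneg_left (h e e' ?_ ?_) (by positivity)
              · have hx : 0 < dp e := h1
                rw [hdp] at hx; simp only [lt_max_iff] at hx
                rcases hx with h' | h'
                · exact h'
                · exact absurd h' (lt_irrefl 0)
              · have hx : 0 < dm e' := h2
                rw [hdm] at hx; simp only [lt_max_iff] at hx
                rcases hx with h' | h'
                · linarith
                · exact absurd h' (lt_irrefl 0)
      _ = s⁻¹ * (s * s * M) := by
          rw [show ∑ e, ∑ e', dp e * dm e' * M = (∑ e, dp e) * (∑ e', dm e') * M by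
            rw [Finset.sum_mul_sum, Finset.sum_mul]
            refine Finset.sum_congr rfl fun e _ => ?_
            rw [Finset.sum_mul]]
          rw [hsm, ← hs]
      _ = M / 2 * ∑ e, |d e| := by rw [habs']; field_simp

lemma span_bound {Y : Type*} [Fintype Y] (V : Y → ℝ) (d : Y → ℝ)
    (hd : ∑ y, d y = 0) {M : ℝ} (hM : 0 ≤ M) (h : ∀ y y', |V y - V y'| ≤ M) :
    |∑ y, V y * d y| ≤ M / 2 * ∑ y, |d y| := by
  have := couple (E := Y) (Y := Unit) (fun y _ => V y) d hd hM
    (fun e e' _ _ => by simpa [l1] using h e e')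
  simpa [l1] using this

/-- weighted average bounded by sup bound -/
lemma weighted_bound {A : Type*} [Fintype A] {u g : A → ℝ} (hu : IsProb u) {B : ℝ}
    (hg : ∀ a, |g a| ≤ B) : |∑ a, g a * u a| ≤ B := by
  calc |∑ a, g a * u a| ≤ ∑ a, |g a * u a| := Finset.abs_sum_le_sum_abs _ _
    _ ≤ ∑ a, B * u a := Finset.sum_le_sum fun a _ => by
        rw [abs_mul, abs_of_nonneg (hu.1 a)]
        exact mul_le_mul_of_nonneg_right (hg a) (hu.1 a)
    _ = B := by rw [← Finset.mul_sum, hu.2, mul_one]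

lemma strong_max_ineq {A : Type*} [Fintype A] {Ω : (A → ℝ) → ℝ} {DΩ : (A → ℝ) → (A → ℝ)}
    {ρ : ℝ} (hρ : 0 < ρ) (hΩ : StrongConvex Ω DΩ ρ) (c : A → ℝ) {fm u : A → ℝ}
    (hfm : IsProb fm) (hu : IsProb u)
    (hmax : ∀ w, IsProb w → (∑ a, c a * w a) - Ω w ≤ (∑ a, c a * fm a) - Ω fm) :
    (∑ a, c a * u a) - Ω u + ρ / 2 * (l1 u fm) ^ 2 ≤ (∑ a, c a * fm a) - Ω fm := by
  set L := l1 u fm with hL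
  have hL0 : 0 ≤ L := l1_nonneg _ _
  have main : ∀ t : ℝ, 0 < t → t < 1 →
      (1 - t) * (ρ / 2 * L ^ 2) ≤ ((∑ a, c a * fm a) - Ω fm) - ((∑ a, c a * u a) - Ω u) := by
    intro t ht0 ht1
    set w : A → ℝ := fun a => (1 - t) * fm a + t * u a with hw
    have hwp : IsProb w := by
      constructor
      · intro a; have := hfm.1 a; have := hu.1 a; simp only [hw]; nlinarith
      · simp only [hw]
        rw [Finset.sum_add_distrib, ← Finset.mul_sum, ← Finset.mul_sum, hfm.2, hu.2]; ring
    have l1wf : l1 w fm = t * L := by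
      unfold l1 at hL ⊢
      rw [hL, Finset.mul_sum]
      refine Finset.sum_congr rfl fun a _ => ?_
      rw [show w a - fm a = t * (u a - fm a) by simp only [hw]; ring, abs_mul,
        abs_of_pos ht0]
    have l1wu : l1 w u = (1 - t) * L := by
      unfold l1 at hL ⊢
      rw [hL, Finset.mul_sum]
      refine Finset.sum_congr rfl fun a _ => ?_
      rw [show w a - u a = (1 - t) * (fm a - u a) by simp only [hw]; ring, abs_mul,
        abs_of_pos (by linarith), abs_sub_comm]
    have hs1 := hΩ w fm hwp hfm
    have hs2 := hΩ w u hwp hu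
    rw [l1wf] at hs1
    rw [l1wu] at hs2
    have hgrad : (1 - t) * (∑ a, DΩ w a * (fm a - w a)) + t * (∑ a, DΩ w a * (u a - w a)) = 0 := by
      rw [Finset.mul_sum, Finset.mul_sum, ← Finset.sum_add_distrib]
      refine Finset.sum_eq_zero fun a _ => ?_
      simp only [hw]; ring
    have hlin : ∑ a, c a * w a = (1 - t) * (∑ a, c a * fm a) + t * (∑ a, c a * u a) := by
      rw [Finset.mul_sum, Finset.mul_sum, ← Finset.sum_add_distrib]
      refine Finset.sum_congr rfl fun a _ => ?_
      simp only [hw]; ring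
    have hmw := hmax w hwp
    have hcomb : Ω w + ρ / 2 * (t * (1 - t)) * L ^ 2 ≤ (1 - t) * Ω fm + t * Ω u := by
      nlinarith [mul_le_mul_of_nonneg_left hs1 (by linarith : (0:ℝ) ≤ 1 - t),
        mul_le_mul_of_nonneg_left hs2 (le_of_lt ht0)]
    have h3 : t * ((1 - t) * (ρ / 2 * L ^ 2)) ≤
        t * (((∑ a, c a * fm a) - Ω fm) - ((∑ a, c a * u a) - Ω u)) := by nlinarith
    exact le_of_mul_le_mul_left h3 ht0
  set c0 := ρ / 2 * L ^ 2 with hc0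
  have hc00 : 0 ≤ c0 := by positivity
  set b := ((∑ a, c a * fm a) - Ω fm) - ((∑ a, c a * u a) - Ω u) with hb
  have hhalf : c0 / 2 ≤ b := by
    have := main (1/2) (by norm_num) (by norm_num); linarith
  have hfin : c0 ≤ b := by
    by_contra hlt
    push_neg at hlt
    have hc0pos : 0 < c0 := by linarith
    set t := (c0 - b) / (2 * c0) with htd
    have ht0 : 0 < t := div_pos (by linarith) (by linarith)
    have ht1 : t < 1 := by
      rw [htd, div_lt_one (by linarith)]; linarith
    have hmt := main t ht0 ht1
    have : (1 - t) * c0 = (c0 + b) / 2 := by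
      have h2 : t * (2 * c0) = c0 - b := by rw [htd]; exact div_mul_cancel₀ _ (by positivity)
      linear_combination (-1/2 : ℝ) * h2
    rw [this] at hmt
    linarith
  linarith


set_option maxHeartbeats 2000000 in
/-- Proposition 4: the mean-field equilibrium operator `H`
satisfies `‖H(μ) - H(μ̂)‖₁ ≤ K_H ‖μ - μ̂‖₁` with
`K_H = (3K1/2)(1 + K_{H1}/ρ)`; in particular it is a contraction
whenever `K_H < 1`. -/
theorem statement10 {X A : Type*} [Fintype X] [Fintype A] [Nonempty X] [Nonempty A]
    [DecidableEq X] [DecidableEq A]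
    (r : X → A → (X → ℝ) → ℝ) (p : X → A → (X → ℝ) → X → ℝ)
    (L1 K1 : ℝ) (hL1 : 0 ≤ L1) (hK1 : 0 ≤ K1)
    (hr_nonneg : RewardNonneg r) (hr : RewardLip r L1)
    (hp_prob : IsKernel p) (hp : KernelLip p K1)
    (Ω : (A → ℝ) → ℝ) (DΩ : (A → ℝ) → (A → ℝ)) (ρ : ℝ) (hρ : 0 < ρ)
    (hΩ : StrongConvex Ω DΩ ρ)
    (β : ℝ) (hβ0 : 0 < β) (hβ1 : β < 1) (hβK : β * K1 / 2 < 1)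
    (Qs : (X → ℝ) → X → (A → ℝ) → ℝ)
    (hQs : ∀ μ, IsProb μ → BddFixedPoint r p Ω β μ (Qs μ))
    (f : (X → ℝ) → X → A → ℝ)
    (hf : ∀ μ, IsProb μ → ∀ x, IsProb (f μ x))
    (hfmax : ∀ μ, IsProb μ → ∀ x u, IsProb u → Qs μ x u ≤ Qs μ x (f μ x)) :
    ∀ μ μ', IsProb μ → IsProb μ' →
      l1 (fun y => ∑ x, (∑ a, p x a μ y * f μ x a) * μ x)
         (fun y => ∑ x, (∑ a, p x a μ' y * f μ' x a) * μ' x) ≤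
        (3 * K1 / 2) * (1 + ((L1 / (1 - β * K1 / 2)) / (1 - β)) / ρ) * l1 μ μ' := by
  intro μ μ' hμ hμ'
  have h1mβK : (0:ℝ) < 1 - β * K1 / 2 := by linarith
  have h1mβ : (0:ℝ) < 1 - β := by linarith
  set t := l1 μ μ' with htdef
  have ht0 : 0 ≤ t := l1_nonneg _ _
  set Qlip := L1 / (1 - β * K1 / 2) with hQlipdef
  set KH1 := Qlip / (1 - β) with hKH1def
  have hQlip0 : 0 ≤ Qlip := by positivity
  have hKH10 : 0 ≤ KH1 := by positivity
  have hQmul : Qlip * (1 - β * K1 / 2) = L1 := div_mul_cancel₀ _ (ne_of_gt h1mβK)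
  have hKmul : KH1 * (1 - β) = Qlip := div_mul_cancel₀ _ (ne_of_gt h1mβ)
  have hQlipfix : L1 + β * K1 / 2 * Qlip = Qlip := by linear_combination -hQmul
  have hKH1fix : Qlip + β * KH1 = KH1 := by linear_combination -hKmul
  have hQlipKH1 : Qlip ≤ KH1 := by nlinarith
  set V : (X → ℝ) → X → ℝ := fun ν y => Qs ν y (f ν y) with hVdef
  set cc : (X → ℝ) → X → A → ℝ :=
    fun ν x b => r x b ν + β * ∑ y, V ν y * p x b ν y with hccdef
  have hfix : ∀ ν, IsProb ν → ∀ x u, IsProb u →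
      Qs ν x u = (∑ b, cc ν x b * u b) - Ω u := by
    intro ν hν x u hu
    have hQmax : ∀ y, Qmax (Qs ν) y = V ν y := by
      intro y
      have hne : Nonempty {w : A → ℝ // IsProb w} := ⟨⟨f ν y, hf ν hν y⟩⟩
      refine le_antisymm (ciSup_le fun w => hfmax ν hν y w.1 w.2) ?_
      exact le_ciSup (f := fun w : {w : A → ℝ // IsProb w} => Qs ν y w.1)
        ⟨Qs ν y (f ν y), by rintro v ⟨w, rfl⟩; exact hfmax ν hν y w.1 w.2⟩
        (⟨f ν y, hf ν hν y⟩ : {w : A → ℝ // IsProb w})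
    rw [(hQs ν hν).2 x u hu]
    unfold Lbell
    simp only [hQmax]
    have hswap : ∑ y, V ν y * (∑ b, p x b ν y * u b)
        = ∑ b, (∑ y, V ν y * p x b ν y) * u b := by
      calc ∑ y, V ν y * (∑ b, p x b ν y * u b)
          = ∑ y, ∑ b, V ν y * p x b ν y * u b := by
            refine Finset.sum_congr rfl fun y _ => ?_
            rw [Finset.mul_sum]
            exact Finset.sum_congr rfl fun b _ => by ring
        _ = ∑ b, ∑ y, V ν y * p x b ν y * u b := Finset.sum_comm
        _ = ∑ b, (∑ y, V ν y * p x b ν y) * u b := by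
            exact Finset.sum_congr rfl fun b _ => by rw [Finset.sum_mul]
    rw [hswap]
    rw [show ∑ b, cc ν x b * u b
        = (∑ b, r x b ν * u b) + β * ∑ b, (∑ y, V ν y * p x b ν y) * u b by
      rw [Finset.mul_sum, ← Finset.sum_add_distrib]
      exact Finset.sum_congr rfl fun b _ => by simp only [hccdef]; ring]
    ring
  have hdiff : ∀ ν ν', IsProb ν → IsProb ν' → ∀ x x' u, IsProb u →
      Qs ν x u - Qs ν' x' u = ∑ b, (cc ν x b - cc ν' x' b) * u b := by
    intro ν ν' hν hν' x x' u hu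
    rw [hfix ν hν x u hu, hfix ν' hν' x' u hu]
    rw [show ∑ b, (cc ν x b - cc ν' x' b) * u b
        = (∑ b, cc ν x b * u b) - ∑ b, cc ν' x' b * u b by
      rw [← Finset.sum_sub_distrib]; exact Finset.sum_congr rfl fun b _ => by ring]
    ring
  have hVspan : ∀ ν, IsProb ν → ∀ y y', |V ν y - V ν y'| ≤ Qlip := by
    intro ν hν y y'
    obtain ⟨ymax, -, hymax⟩ := Finset.exists_max_image Finset.univ (V ν) ⟨Classical.arbitrary X, Finset.mem_univ _⟩
    obtain ⟨ymin, -, hymin⟩ := Finset.exists_min_image Finset.univ (V ν) ⟨Classical.arbitrary X, Finset.mem_univ _⟩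
    set M := V ν ymax - V ν ymin with hMdef
    have hM0 : 0 ≤ M := by
      have := hymax ymin (Finset.mem_univ _); have := hymin ymax (Finset.mem_univ _); linarith [hymax ymin (Finset.mem_univ _)]
    have hspan : ∀ z z', |V ν z - V ν z'| ≤ M := by
      intro z z'
      rw [abs_sub_le_iff]
      constructor
      · have := hymax z (Finset.mem_univ _); have := hymin z' (Finset.mem_univ _); linarith
      · have := hymax z' (Finset.mem_univ _); have := hymin z (Finset.mem_univ _); linarith
    have hccb : ∀ z z' b, |cc ν z b - cc ν z' b| ≤ L1 + β * (M / 2 * K1) := by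
      intro z z' b
      have hr1 : |r z b ν - r z' b ν| ≤ L1 := by
        have := hr z z' b b ν ν hν hν
        simp only [ind_self, l1] at this
        simp only [sub_self, abs_zero, Finset.sum_const_zero] at this
        calc |r z b ν - r z' b ν| ≤ L1 * (ind z z' + 2 * 0 + 0) := by
              simpa using this
          _ ≤ L1 := by
              have := ind_le_one z z'; have := ind_nonneg z z'; nlinarith
      have hp1 : l1 (p z b ν) (p z' b ν) ≤ K1 := by
        have := hp z z' b b ν ν hν hν
        simp only [ind_self, l1] at this
        simp only [sub_self, abs_zero, Finset.sum_const_zero] at this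
        calc l1 (p z b ν) (p z' b ν) ≤ K1 * (ind z z' + 2 * 0 + 0) := by
              simpa [l1] using this
          _ ≤ K1 := by
              have := ind_le_one z z'; have := ind_nonneg z z'; nlinarith
      have hsum0 : ∑ w, (p z b ν w - p z' b ν w) = 0 := by
        rw [Finset.sum_sub_distrib, (hp_prob z b ν hν).2, (hp_prob z' b ν hν).2]; ring
      have hsb : |∑ w, V ν w * (p z b ν w - p z' b ν w)| ≤ M / 2 * K1 := by
        have := span_bound (V ν) (fun w => p z b ν w - p z' b ν w) hsum0 hM0 hspan
        calc |∑ w, V ν w * (p z b ν w - p z' b ν w)| ≤ M / 2 * ∑ w, |p z b ν w - p z' b ν w| := this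
          _ ≤ M / 2 * K1 := by
              refine mul_le_mul_of_nonneg_left ?_ (by positivity)
              simpa [l1] using hp1
      have hccsub : cc ν z b - cc ν z' b
          = (r z b ν - r z' b ν) + β * ∑ w, V ν w * (p z b ν w - p z' b ν w) := by
        simp only [hccdef]
        rw [show ∑ w, V ν w * (p z b ν w - p z' b ν w)
            = (∑ w, V ν w * p z b ν w) - ∑ w, V ν w * p z' b ν w by
          rw [← Finset.sum_sub_distrib]; exact Finset.sum_congr rfl fun w _ => by ring]
        ring
      rw [hccsub]
      calc |(r z b ν - r z' b ν) + β * ∑ w, V ν w * (p z b ν w - p z' b ν w)|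
          ≤ |r z b ν - r z' b ν| + β * |∑ w, V ν w * (p z b ν w - p z' b ν w)| := by
            refine (abs_add_le _ _).trans ?_
            rw [abs_mul, abs_of_pos hβ0]
        _ ≤ L1 + β * (M / 2 * K1) := by
            refine add_le_add hr1 (mul_le_mul_of_nonneg_left hsb (le_of_lt hβ0))
    have hkey : ∀ z z', V ν z - V ν z' ≤ L1 + β * (M / 2 * K1) := by
      intro z z'
      have h1 : Qs ν z' (f ν z) ≤ V ν z' := hfmax ν hν z' (f ν z) (hf ν hν z)
      have h2 : Qs ν z (f ν z) - Qs ν z' (f ν z)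
          = ∑ b, (cc ν z b - cc ν z' b) * f ν z b := hdiff ν ν hν hν z z' (f ν z) (hf ν hν z)
      have h3 : |∑ b, (cc ν z b - cc ν z' b) * f ν z b| ≤ L1 + β * (M / 2 * K1) :=
        weighted_bound (hf ν hν z) (hccb z z')
      have h4 : V ν z - V ν z' ≤ Qs ν z (f ν z) - Qs ν z' (f ν z) := by
        simp only [hVdef]; linarith
      rw [h2] at h4
      calc V ν z - V ν z' ≤ ∑ b, (cc ν z b - cc ν z' b) * f ν z b := h4
        _ ≤ |∑ b, (cc ν z b - cc ν z' b) * f ν z b| := le_abs_self _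
        _ ≤ L1 + β * (M / 2 * K1) := h3
    have hMQ : M ≤ Qlip := by
      have := hkey ymax ymin
      rw [← hMdef] at this
      nlinarith [hQmul]
    exact (hspan y y').trans hMQ
  have hD : ∀ y, |V μ y - V μ' y| ≤ KH1 * t := by
    obtain ⟨y0, -, hy0⟩ := Finset.exists_max_image Finset.univ (fun z => |V μ z - V μ' z|)
      ⟨Classical.arbitrary X, Finset.mem_univ _⟩
    set D := |V μ y0 - V μ' y0| with hDdef
    have hD0 : 0 ≤ D := abs_nonneg _
    have hccb : ∀ z b, |cc μ z b - cc μ' z b| ≤ Qlip * t + β * D := by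
      intro z b
      have hr1 : |r z b μ - r z b μ'| ≤ L1 * t := by
        have h := hr z z b b μ μ' hμ hμ'
        simp only [ind_self] at h
        rw [← htdef] at h
        calc |r z b μ - r z b μ'| ≤ L1 * (0 + 2 * 0 + t) := h
          _ = L1 * t := by ring
      have hp1 : ∑ w, |p z b μ w - p z b μ' w| ≤ K1 * t := by
        have h := hp z z b b μ μ' hμ hμ'
        simp only [ind_self] at h
        rw [← htdef] at h
        calc ∑ w, |p z b μ w - p z b μ' w| = l1 (p z b μ) (p z b μ') := rfl
          _ ≤ K1 * (0 + 2 * 0 + t) := h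
          _ = K1 * t := by ring
      have hsum0 : ∑ w, (p z b μ w - p z b μ' w) = 0 := by
        rw [Finset.sum_sub_distrib, (hp_prob z b μ hμ).2, (hp_prob z b μ' hμ').2]; ring
      have hS1 : |∑ w, (V μ w - V μ' w) * p z b μ w| ≤ D := by
        calc |∑ w, (V μ w - V μ' w) * p z b μ w| ≤ ∑ w, |(V μ w - V μ' w) * p z b μ w| :=
              Finset.abs_sum_le_sum_abs _ _
          _ ≤ ∑ w, D * p z b μ w := by
              refine Finset.sum_le_sum fun w _ => ?_
              rw [abs_mul, abs_of_nonneg ((hp_prob z b μ hμ).1 w)]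
              exact mul_le_mul_of_nonneg_right (hy0 w (Finset.mem_univ _)) ((hp_prob z b μ hμ).1 w)
          _ = D := by rw [← Finset.mul_sum, (hp_prob z b μ hμ).2, mul_one]
      have hS2 : |∑ w, V μ' w * (p z b μ w - p z b μ' w)| ≤ Qlip / 2 * (K1 * t) := by
        have h := span_bound (V μ') (fun w => p z b μ w - p z b μ' w) hsum0 hQlip0 (hVspan μ' hμ')
        refine h.trans ?_
        exact mul_le_mul_of_nonneg_left hp1 (by positivity)
      have hdec : cc μ z b - cc μ' z b
          = (r z b μ - r z b μ')
            + β * ((∑ w, (V μ w - V μ' w) * p z b μ w)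
              + ∑ w, V μ' w * (p z b μ w - p z b μ' w)) := by
        simp only [hccdef]
        rw [show (∑ w, (V μ w - V μ' w) * p z b μ w)
              + (∑ w, V μ' w * (p z b μ w - p z b μ' w))
            = (∑ w, V μ w * p z b μ w) - ∑ w, V μ' w * p z b μ' w by
          rw [← Finset.sum_add_distrib, ← Finset.sum_sub_distrib]
          exact Finset.sum_congr rfl fun w _ => by ring]
        ring
      rw [hdec]
      calc |(r z b μ - r z b μ')
            + β * ((∑ w, (V μ w - V μ' w) * p z b μ w)
              + ∑ w, V μ' w * (p z b μ w - p z b μ' w))|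
          ≤ |r z b μ - r z b μ'|
            + β * (|∑ w, (V μ w - V μ' w) * p z b μ w|
              + |∑ w, V μ' w * (p z b μ w - p z b μ' w)|) := by
            refine (abs_add_le _ _).trans ?_
            rw [abs_mul, abs_of_pos hβ0]
            exact add_le_add_right (mul_le_mul_of_nonneg_left (abs_add_le _ _) (le_of_lt hβ0)) _
        _ ≤ L1 * t + β * (D + Qlip / 2 * (K1 * t)) := by
            refine add_le_add hr1 (mul_le_mul_of_nonneg_left (add_le_add hS1 hS2) (le_of_lt hβ0))
        _ = Qlip * t + β * D := by linear_combination t * hQlipfix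
    have hkey : ∀ z, |V μ z - V μ' z| ≤ Qlip * t + β * D := by
      intro z
      rw [abs_sub_le_iff]
      constructor
      · have h1 : Qs μ' z (f μ z) ≤ V μ' z := hfmax μ' hμ' z (f μ z) (hf μ hμ z)
        have h2 := hdiff μ μ' hμ hμ' z z (f μ z) (hf μ hμ z)
        have h3 := weighted_bound (hf μ hμ z) (fun b => hccb z b)
        have h4 : V μ z - V μ' z ≤ Qs μ z (f μ z) - Qs μ' z (f μ z) := by
          simp only [hVdef]; linarith
        rw [h2] at h4
        exact h4.trans ((le_abs_self _).trans h3)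
      · have h1 : Qs μ z (f μ' z) ≤ V μ z := hfmax μ hμ z (f μ' z) (hf μ' hμ' z)
        have h2 := hdiff μ' μ hμ' hμ z z (f μ' z) (hf μ' hμ' z)
        have h3 := weighted_bound (hf μ' hμ' z)
          (fun b => by rw [abs_sub_comm]; exact hccb z b : ∀ b, |cc μ' z b - cc μ z b| ≤ Qlip * t + β * D)
        have h4 : V μ' z - V μ z ≤ Qs μ' z (f μ' z) - Qs μ z (f μ' z) := by
          simp only [hVdef]; linarith
        rw [h2] at h4
        exact h4.trans ((le_abs_self _).trans h3)
    have hstep : D ≤ Qlip * t + β * D := by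
      have := hkey y0; rw [← hDdef] at this; exact this
    have hDb : D ≤ KH1 * t := by
      have h5 : D * (1 - β) ≤ (KH1 * t) * (1 - β) := by
        have h6 : D * (1 - β) ≤ Qlip * t := by linarith
        refine h6.trans (le_of_eq ?_)
        rw [← hKmul]; ring
      exact le_of_mul_le_mul_right h5 h1mβ
    exact fun y => (hy0 y (Finset.mem_univ _)).trans hDb
  have hcd : ∀ x x' b, |cc μ x b - cc μ' x' b| ≤ KH1 * (ind x x' + t) := by
    intro x x' b
    have hr1 : |r x b μ - r x' b μ'| ≤ L1 * (ind x x' + t) := by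
      have h := hr x x' b b μ μ' hμ hμ'
      simp only [ind_self] at h
      rw [← htdef] at h
      calc |r x b μ - r x' b μ'| ≤ L1 * (ind x x' + 2 * 0 + t) := h
        _ = L1 * (ind x x' + t) := by ring
    have hp1 : ∑ w, |p x b μ w - p x' b μ' w| ≤ K1 * (ind x x' + t) := by
      have h := hp x x' b b μ μ' hμ hμ'
      simp only [ind_self] at h
      rw [← htdef] at h
      calc ∑ w, |p x b μ w - p x' b μ' w| = l1 (p x b μ) (p x' b μ') := rfl
        _ ≤ K1 * (ind x x' + 2 * 0 + t) := h
        _ = K1 * (ind x x' + t) := by ring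
    have hsum0 : ∑ w, (p x b μ w - p x' b μ' w) = 0 := by
      rw [Finset.sum_sub_distrib, (hp_prob x b μ hμ).2, (hp_prob x' b μ' hμ').2]; ring
    have hS1 : |∑ w, (V μ w - V μ' w) * p x b μ w| ≤ KH1 * t := by
      calc |∑ w, (V μ w - V μ' w) * p x b μ w| ≤ ∑ w, |(V μ w - V μ' w) * p x b μ w| :=
            Finset.abs_sum_le_sum_abs _ _
        _ ≤ ∑ w, (KH1 * t) * p x b μ w := by
            refine Finset.sum_le_sum fun w _ => ?_
            rw [abs_mul, abs_of_nonneg ((hp_prob x b μ hμ).1 w)]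
            exact mul_le_mul_of_nonneg_right (hD w) ((hp_prob x b μ hμ).1 w)
        _ = KH1 * t := by rw [← Finset.mul_sum, (hp_prob x b μ hμ).2, mul_one]
    have hS2 : |∑ w, V μ' w * (p x b μ w - p x' b μ' w)| ≤ Qlip / 2 * (K1 * (ind x x' + t)) := by
      have h := span_bound (V μ') (fun w => p x b μ w - p x' b μ' w) hsum0 hQlip0 (hVspan μ' hμ')
      refine h.trans ?_
      exact mul_le_mul_of_nonneg_left hp1 (by positivity)
    have hdec : cc μ x b - cc μ' x' b
        = (r x b μ - r x' b μ')
          + β * ((∑ w, (V μ w - V μ' w) * p x b μ w)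
            + ∑ w, V μ' w * (p x b μ w - p x' b μ' w)) := by
      simp only [hccdef]
      rw [show (∑ w, (V μ w - V μ' w) * p x b μ w)
            + (∑ w, V μ' w * (p x b μ w - p x' b μ' w))
          = (∑ w, V μ w * p x b μ w) - ∑ w, V μ' w * p x' b μ' w by
        rw [← Finset.sum_add_distrib, ← Finset.sum_sub_distrib]
        exact Finset.sum_congr rfl fun w _ => by ring]
      ring
    rw [hdec]
    have habs : |(r x b μ - r x' b μ')
          + β * ((∑ w, (V μ w - V μ' w) * p x b μ w)
            + ∑ w, V μ' w * (p x b μ w - p x' b μ' w))|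
        ≤ |r x b μ - r x' b μ'|
          + β * (|∑ w, (V μ w - V μ' w) * p x b μ w|
            + |∑ w, V μ' w * (p x b μ w - p x' b μ' w)|) := by
      refine (abs_add_le _ _).trans ?_
      rw [abs_mul, abs_of_pos hβ0]
      exact add_le_add_right (mul_le_mul_of_nonneg_left (abs_add_le _ _) (le_of_lt hβ0)) _
    refine habs.trans ?_
    have e1 : Qlip * t + β * KH1 * t = KH1 * t := by linear_combination t * hKH1fix
    have e2 : Qlip * ind x x' ≤ KH1 * ind x x' :=
      mul_le_mul_of_nonneg_right hQlipKH1 (ind_nonneg x x')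
    calc |r x b μ - r x' b μ'|
          + β * (|∑ w, (V μ w - V μ' w) * p x b μ w|
            + |∑ w, V μ' w * (p x b μ w - p x' b μ' w)|)
        ≤ L1 * (ind x x' + t) + β * (KH1 * t + Qlip / 2 * (K1 * (ind x x' + t))) := by
          refine add_le_add hr1 (mul_le_mul_of_nonneg_left (add_le_add hS1 hS2) (le_of_lt hβ0))
      _ = Qlip * (ind x x' + t) + β * KH1 * t := by
          linear_combination (ind x x' + t) * hQlipfix
      _ ≤ KH1 * (ind x x' + t) := by
          have : Qlip * (ind x x' + t) = Qlip * ind x x' + Qlip * t := by ring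
          rw [this]
          have : KH1 * (ind x x' + t) = KH1 * ind x x' + KH1 * t := by ring
          rw [this]
          linarith
  have hflip : ∀ x x', l1 (f μ x) (f μ' x') ≤ KH1 / ρ * (ind x x' + t) := by
    intro x x'
    set L := l1 (f μ x) (f μ' x') with hLdef
    have hL0 : 0 ≤ L := l1_nonneg _ _
    have hmax1 : ∀ w, IsProb w →
        (∑ b, cc μ x b * w b) - Ω w ≤ (∑ b, cc μ x b * f μ x b) - Ω (f μ x) := by
      intro w hw
      rw [← hfix μ hμ x w hw, ← hfix μ hμ x (f μ x) (hf μ hμ x)]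
      exact hfmax μ hμ x w hw
    have hmax2 : ∀ w, IsProb w →
        (∑ b, cc μ' x' b * w b) - Ω w ≤ (∑ b, cc μ' x' b * f μ' x' b) - Ω (f μ' x') := by
      intro w hw
      rw [← hfix μ' hμ' x' w hw, ← hfix μ' hμ' x' (f μ' x') (hf μ' hμ' x')]
      exact hfmax μ' hμ' x' w hw
    have h1 := strong_max_ineq hρ hΩ (cc μ x) (hf μ hμ x) (hf μ' hμ' x') hmax1
    have h2 := strong_max_ineq hρ hΩ (cc μ' x') (hf μ' hμ' x') (hf μ hμ x) hmax2
    have hLsym : l1 (f μ' x') (f μ x) = L := l1_comm _ _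
    rw [hLsym] at h1
    rw [← hLdef] at h2
    have hsum : ρ * L ^ 2 ≤ ∑ b, (cc μ x b - cc μ' x' b) * (f μ x b - f μ' x' b) := by
      have e : ∑ b, (cc μ x b - cc μ' x' b) * (f μ x b - f μ' x' b)
          = ((∑ b, cc μ x b * f μ x b) - ∑ b, cc μ x b * f μ' x' b)
            + ((∑ b, cc μ' x' b * f μ' x' b) - ∑ b, cc μ' x' b * f μ x b) := by
        rw [← Finset.sum_sub_distrib, ← Finset.sum_sub_distrib, ← Finset.sum_add_distrib]
        exact Finset.sum_congr rfl fun b _ => by ring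
      rw [e]; linarith
    have hub : ∑ b, (cc μ x b - cc μ' x' b) * (f μ x b - f μ' x' b)
        ≤ (KH1 * (ind x x' + t)) * L := by
      calc ∑ b, (cc μ x b - cc μ' x' b) * (f μ x b - f μ' x' b)
          ≤ ∑ b, |(cc μ x b - cc μ' x' b) * (f μ x b - f μ' x' b)| :=
            Finset.sum_le_sum fun b _ => le_abs_self _
        _ = ∑ b, |cc μ x b - cc μ' x' b| * |f μ x b - f μ' x' b| :=
            Finset.sum_congr rfl fun b _ => abs_mul _ _
        _ ≤ ∑ b, (KH1 * (ind x x' + t)) * |f μ x b - f μ' x' b| :=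
            Finset.sum_le_sum fun b _ =>
              mul_le_mul_of_nonneg_right (hcd x x' b) (abs_nonneg _)
        _ = (KH1 * (ind x x' + t)) * L := by
            rw [hLdef]; unfold l1; rw [← Finset.mul_sum]
    have hB0 : 0 ≤ KH1 * (ind x x' + t) :=
      mul_nonneg hKH10 (add_nonneg (ind_nonneg x x') ht0)
    have hLB : L ≤ KH1 * (ind x x' + t) / ρ := by
      rcases eq_or_lt_of_le hL0 with h0 | h0
      · rw [← h0]; positivity
      · rw [le_div_iff₀ hρ]
        nlinarith
    have hrw : KH1 * (ind x x' + t) / ρ = KH1 / ρ * (ind x x' + t) := by ring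
    rw [← hrw]
    exact hLB
  have hq : ∀ x x', l1 (fun y => ∑ b, p x b μ y * f μ x b)
      (fun y => ∑ b, p x' b μ' y * f μ' x' b) ≤ K1 * (1 + KH1 / ρ) * (ind x x' + t) := by
    intro x x'
    have hdec : ∀ y, (∑ b, p x b μ y * f μ x b) - (∑ b, p x' b μ' y * f μ' x' b)
        = (∑ b, (p x b μ y - p x' b μ' y) * f μ x b)
          + ∑ b, p x' b μ' y * (f μ x b - f μ' x' b) := by
      intro y
      rw [← Finset.sum_add_distrib, ← Finset.sum_sub_distrib]
      exact Finset.sum_congr rfl fun b _ => by ring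
    unfold l1
    calc ∑ y, |(∑ b, p x b μ y * f μ x b) - ∑ b, p x' b μ' y * f μ' x' b|
        ≤ ∑ y, (|∑ b, (p x b μ y - p x' b μ' y) * f μ x b|
            + |∑ b, p x' b μ' y * (f μ x b - f μ' x' b)|) := by
          refine Finset.sum_le_sum fun y _ => ?_
          rw [hdec y]
          exact abs_add_le _ _
      _ = (∑ y, |∑ b, (p x b μ y - p x' b μ' y) * f μ x b|)
          + ∑ y, |∑ b, p x' b μ' y * (f μ x b - f μ' x' b)| := Finset.sum_add_distrib
      _ ≤ K1 * (ind x x' + t) + K1 * (KH1 / ρ * (ind x x' + t)) := by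
          refine add_le_add ?_ ?_
          · calc ∑ y, |∑ b, (p x b μ y - p x' b μ' y) * f μ x b|
                ≤ ∑ y, ∑ b, |p x b μ y - p x' b μ' y| * f μ x b := by
                  refine Finset.sum_le_sum fun y _ => ?_
                  refine (Finset.abs_sum_le_sum_abs _ _).trans ?_
                  refine Finset.sum_le_sum fun b _ => ?_
                  rw [abs_mul, abs_of_nonneg ((hf μ hμ x).1 b)]
              _ = ∑ b, f μ x b * l1 (p x b μ) (p x' b μ') := by
                  rw [Finset.sum_comm]
                  refine Finset.sum_congr rfl fun b _ => ?_
                  unfold l1; rw [Finset.mul_sum]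
                  exact Finset.sum_congr rfl fun y _ => by ring
              _ ≤ ∑ b, f μ x b * (K1 * (ind x x' + t)) := by
                  refine Finset.sum_le_sum fun b _ => ?_
                  refine mul_le_mul_of_nonneg_left ?_ ((hf μ hμ x).1 b)
                  have h := hp x x' b b μ μ' hμ hμ'
                  simp only [ind_self] at h
                  rw [← htdef] at h
                  calc l1 (p x b μ) (p x' b μ') ≤ K1 * (ind x x' + 2 * 0 + t) := h
                    _ = K1 * (ind x x' + t) := by ring
              _ = K1 * (ind x x' + t) := by
                  rw [← Finset.sum_mul, (hf μ hμ x).2, one_mul]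
          · have hd0 : ∑ b, (f μ x b - f μ' x' b) = 0 := by
              rw [Finset.sum_sub_distrib, (hf μ hμ x).2, (hf μ' hμ' x').2]; ring
            have hMp : ∀ b b', 0 < f μ x b - f μ' x' b → f μ x b' - f μ' x' b' < 0 →
                l1 (p x' b μ') (p x' b' μ') ≤ 2 * K1 := by
              intro b b' _ _
              have h := hp x' x' b b' μ' μ' hμ' hμ'
              simp only [ind_self] at h
              have hll : l1 μ' μ' = 0 := by unfold l1; simp
              rw [hll] at h
              calc l1 (p x' b μ') (p x' b' μ') ≤ K1 * (0 + 2 * ind b b' + 0) := h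
                _ ≤ 2 * K1 := by
                    have := ind_le_one b b'; have := ind_nonneg b b'; nlinarith
            have hcp := couple (fun b => p x' b μ') (fun b => f μ x b - f μ' x' b) hd0
              (M := 2 * K1) (by positivity) hMp
            calc ∑ y, |∑ b, p x' b μ' y * (f μ x b - f μ' x' b)|
                ≤ 2 * K1 / 2 * ∑ b, |f μ x b - f μ' x' b| := hcp
              _ = K1 * l1 (f μ x) (f μ' x') := by unfold l1; ring
              _ ≤ K1 * (KH1 / ρ * (ind x x' + t)) :=
                  mul_le_mul_of_nonneg_left (hflip x x') hK1
      _ = K1 * (1 + KH1 / ρ) * (ind x x' + t) := by ring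
  -- final assembly
  set C := K1 * (1 + KH1 / ρ) with hCdef
  have hC0 : 0 ≤ C := by positivity
  set m : X → ℝ := fun x => min (μ x) (μ' x) with hmdef
  set av : X → ℝ := fun x => μ x - m x with havdef
  set bv : X → ℝ := fun x => μ' x - m x with hbvdef
  have hm0 : ∀ x, 0 ≤ m x := fun x => le_min (hμ.1 x) (hμ'.1 x)
  have hav0 : ∀ x, 0 ≤ av x := fun x => by
    simp only [havdef, hmdef, sub_nonneg]; exact min_le_left _ _
  have hbv0 : ∀ x, 0 ≤ bv x := fun x => by
    simp only [hbvdef, hmdef, sub_nonneg]; exact min_le_right _ _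
  have habsx : ∀ x, av x + bv x = |μ x - μ' x| := by
    intro x
    simp only [havdef, hbvdef, hmdef]
    have h1 : max (μ x) (μ' x) + min (μ x) (μ' x) = μ x + μ' x := max_add_min _ _
    have h2 : max (μ x) (μ' x) - min (μ x) (μ' x) = |μ x - μ' x| := by
      rw [abs_sub_comm]; exact max_sub_min_eq_abs _ _
    linarith
  have hsum_ab : ∑ x, (av x + bv x) = t := by
    rw [Finset.sum_congr rfl fun x _ => habsx x]
    rw [htdef]; rfl
  have hsq : ∑ x, av x = ∑ x, bv x := by
    have h : ∑ x, (av x - bv x) = 0 := by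
      rw [Finset.sum_congr rfl fun x _ =>
        (by simp only [havdef, hbvdef]; ring : av x - bv x = μ x - μ' x)]
      rw [Finset.sum_sub_distrib, hμ.2, hμ'.2]; ring
    rw [Finset.sum_sub_distrib] at h; linarith
  have hsav : ∑ x, av x = t / 2 := by
    rw [Finset.sum_add_distrib] at hsum_ab; linarith
  have hsbv : ∑ x, bv x = t / 2 := by rw [← hsq]; exact hsav
  have hsm : ∑ x, m x = 1 - t / 2 := by
    have h : ∑ x, (m x + av x) = 1 := by
      rw [Finset.sum_congr rfl fun x _ =>
        (by simp only [havdef]; ring : m x + av x = μ x)]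
      exact hμ.2
    rw [Finset.sum_add_distrib, hsav] at h; linarith
  have hdec : ∀ y, (∑ x, (∑ b, p x b μ y * f μ x b) * μ x)
        - (∑ x, (∑ b, p x b μ' y * f μ' x b) * μ' x)
      = (∑ x, ((∑ b, p x b μ y * f μ x b) - (∑ b, p x b μ' y * f μ' x b)) * m x)
        + ((∑ x, (∑ b, p x b μ y * f μ x b) * av x)
          - (∑ x, (∑ b, p x b μ' y * f μ' x b) * bv x)) := by
    intro y
    rw [← Finset.sum_sub_distrib, ← Finset.sum_sub_distrib, ← Finset.sum_add_distrib]
    refine Finset.sum_congr rfl fun x _ => ?_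
    simp only [havdef, hbvdef]
    ring
  have part1 : ∑ y, |∑ x, ((∑ b, p x b μ y * f μ x b) - (∑ b, p x b μ' y * f μ' x b)) * m x|
      ≤ (1 - t / 2) * (C * t) := by
    calc ∑ y, |∑ x, ((∑ b, p x b μ y * f μ x b) - (∑ b, p x b μ' y * f μ' x b)) * m x|
        ≤ ∑ y, ∑ x, |(∑ b, p x b μ y * f μ x b) - (∑ b, p x b μ' y * f μ' x b)| * m x := by
          refine Finset.sum_le_sum fun y _ => ?_
          refine (Finset.abs_sum_le_sum_abs _ _).trans ?_
          refine Finset.sum_le_sum fun x _ => ?_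
          rw [abs_mul, abs_of_nonneg (hm0 x)]
      _ = ∑ x, m x * l1 (fun y => ∑ b, p x b μ y * f μ x b)
            (fun y => ∑ b, p x b μ' y * f μ' x b) := by
          rw [Finset.sum_comm]
          refine Finset.sum_congr rfl fun x _ => ?_
          unfold l1; rw [Finset.mul_sum]
          exact Finset.sum_congr rfl fun y _ => by ring
      _ ≤ ∑ x, m x * (C * t) := by
          refine Finset.sum_le_sum fun x _ => ?_
          refine mul_le_mul_of_nonneg_left ?_ (hm0 x)
          have h := hq x x
          simp only [ind_self] at h
          calc l1 (fun y => ∑ b, p x b μ y * f μ x b)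
                (fun y => ∑ b, p x b μ' y * f μ' x b)
              ≤ K1 * (1 + KH1 / ρ) * (0 + t) := h
            _ = C * t := by rw [hCdef]; ring
      _ = (1 - t / 2) * (C * t) := by rw [← Finset.sum_mul, hsm]
  set P : X ⊕ X → X → ℝ := Sum.elim (fun x y => ∑ b, p x b μ y * f μ x b)
    (fun x y => ∑ b, p x b μ' y * f μ' x b) with hPdef
  set d : X ⊕ X → ℝ := Sum.elim av (fun x => -bv x) with hddef
  have hd0 : ∑ e, d e = 0 := by
    rw [Fintype.sum_sum_type]
    simp only [hddef, Sum.elim_inl, Sum.elim_inr]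
    rw [Finset.sum_neg_distrib, hsav, hsbv]; ring
  have hMb : ∀ e e', 0 < d e → d e' < 0 → l1 (P e) (P e') ≤ C * (1 + t) := by
    intro e e' hde hde'
    cases e with
    | inr x => simp only [hddef, Sum.elim_inr] at hde; linarith [hbv0 x]
    | inl x =>
      cases e' with
      | inl x' => simp only [hddef, Sum.elim_inl] at hde'; linarith [hav0 x']
      | inr x' =>
        simp only [hPdef, Sum.elim_inl, Sum.elim_inr]
        refine (hq x x').trans ?_
        rw [hCdef]
        refine mul_le_mul_of_nonneg_left ?_ (by positivity)
        have := ind_le_one x x'; linarith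
  have hcp := couple P d hd0 (M := C * (1 + t)) (by positivity) hMb
  have hPd : ∀ y, (∑ x, (∑ b, p x b μ y * f μ x b) * av x)
      - (∑ x, (∑ b, p x b μ' y * f μ' x b) * bv x) = ∑ e, P e y * d e := by
    intro y
    rw [Fintype.sum_sum_type]
    simp only [hPdef, hddef, Sum.elim_inl, Sum.elim_inr, mul_neg]
    rw [Finset.sum_neg_distrib]
    ring
  have hdabs : ∑ e, |d e| = t := by
    rw [Fintype.sum_sum_type]
    simp only [hddef, Sum.elim_inl, Sum.elim_inr, abs_neg]
    rw [Finset.sum_congr rfl fun x _ => abs_of_nonneg (hav0 x),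
      Finset.sum_congr rfl fun x _ => abs_of_nonneg (hbv0 x), hsav, hsbv]
    ring
  have part2 : ∑ y, |(∑ x, (∑ b, p x b μ y * f μ x b) * av x)
      - (∑ x, (∑ b, p x b μ' y * f μ' x b) * bv x)| ≤ C * (1 + t) / 2 * t := by
    calc ∑ y, |(∑ x, (∑ b, p x b μ y * f μ x b) * av x)
          - (∑ x, (∑ b, p x b μ' y * f μ' x b) * bv x)|
        = ∑ y, |∑ e, P e y * d e| := Finset.sum_congr rfl fun y _ => by rw [hPd y]
      _ ≤ C * (1 + t) / 2 * ∑ e, |d e| := hcp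
      _ = C * (1 + t) / 2 * t := by rw [hdabs]
  unfold l1
  calc ∑ y, |(∑ x, (∑ b, p x b μ y * f μ x b) * μ x)
        - ∑ x, (∑ b, p x b μ' y * f μ' x b) * μ' x|
      ≤ ∑ y, (|∑ x, ((∑ b, p x b μ y * f μ x b) - (∑ b, p x b μ' y * f μ' x b)) * m x|
          + |(∑ x, (∑ b, p x b μ y * f μ x b) * av x)
            - (∑ x, (∑ b, p x b μ' y * f μ' x b) * bv x)|) := by
        refine Finset.sum_le_sum fun y _ => ?_
        rw [hdec y]
        exact abs_add_le _ _
    _ = (∑ y, |∑ x, ((∑ b, p x b μ y * f μ x b) - (∑ b, p x b μ' y * f μ' x b)) * m x|)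
        + ∑ y, |(∑ x, (∑ b, p x b μ y * f μ x b) * av x)
          - (∑ x, (∑ b, p x b μ' y * f μ' x b) * bv x)| := Finset.sum_add_distrib
    _ ≤ (1 - t / 2) * (C * t) + C * (1 + t) / 2 * t := add_le_add part1 part2
    _ = 3 * K1 / 2 * (1 + KH1 / ρ) * t := by rw [hCdef]; ring


end MFG
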